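/- Let a ∈ (0,2) with a ≠ 1, let λ > 0 and μ > 0, and let p, q be real numbers with p + q = 1 and pλ + qμ > 0. Then the function x ↦ (p·exp(−λx²/2) + q·exp(−μx²/2) − exp(−(pλ+qμ)x²/2))·x^(−a−1) is integrable on (0,∞) and ∫₀^∞ (p·exp(−λx²/2) + q·exp(−μx²/2) − exp(−(pλ+qμ)x²/2))·x^(−a−1) dx = 2^{−1−a/2}·Γ(−a/2)·(p·λ^{a/2} + q·μ^{a/2} − (pλ+qμ)^{a/2}). -/

import Mathlib

open MeasureTheory Real Set Filter

private lemma abs_exp_neg_sub_one_le {y : ℝ} (hy : 0 ≤ y) : |Real.exp (-y) - 1| ≤ y := by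
  have h1 : Real.exp (-y) ≤ 1 := by
    calc Real.exp (-y) ≤ Real.exp 0 := Real.exp_le_exp.2 (by linarith)
    _ = 1 := Real.exp_zero
  have h2 : 1 - y ≤ Real.exp (-y) := by linarith [Real.add_one_le_exp (-y)]
  rw [abs_sub_comm, abs_of_nonneg (by linarith)]
  linarith

private lemma abs_exp_neg_sub_one_le_one {y : ℝ} (hy : 0 ≤ y) : |Real.exp (-y) - 1| ≤ 1 := by
  have h1 : Real.exp (-y) ≤ 1 := by
    calc Real.exp (-y) ≤ Real.exp 0 := Real.exp_le_exp.2 (by linarith)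
    _ = 1 := Real.exp_zero
  rw [abs_sub_comm, abs_of_nonneg (by linarith)]
  linarith [Real.exp_pos (-y)]

private lemma integrableOn_aux (a t : ℝ) (ha₀ : 0 < a) (ha₂ : a < 2) (ht : 0 < t) :
    IntegrableOn (fun x : ℝ => (exp (-(t * x ^ 2 / 2)) - 1) * x ^ (-a - 1)) (Ioi 0) := by
  have hmeas : AEStronglyMeasurable
      (fun x : ℝ => (exp (-(t * x ^ 2 / 2)) - 1) * x ^ (-a - 1))
      (volume.restrict (Ioi 0)) := by
    apply ContinuousOn.aestronglyMeasurable ?_ measurableSet_Ioi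
    apply ContinuousOn.mul (Continuous.continuousOn (by continuity))
    exact fun x hx =>
      (Real.continuousAt_rpow_const x _ (Or.inl (ne_of_gt hx))).continuousWithinAt
  rw [← Ioc_union_Ioi_eq_Ioi (zero_le_one (α := ℝ)), integrableOn_union]
  constructor
  · apply Integrable.mono'
      (((intervalIntegral.intervalIntegrable_rpow' (r := 1 - a)
        (by linarith)).1).const_mul (t / 2))
    · exact hmeas.mono_measure (Measure.restrict_mono Ioc_subset_Ioi_self le_rfl)
    · filter_upwards [ae_restrict_mem measurableSet_Ioc] with x hx
      have hx0 : 0 < x := hx.1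
      have hy : 0 ≤ t * x ^ 2 / 2 := by positivity
      have hx2 : x ^ (2 : ℕ) * x ^ (-a - 1) = x ^ (1 - a) := by
        rw [← Real.rpow_natCast x 2, ← Real.rpow_add hx0]
        congr 1 <;> push_cast <;> ring
      calc ‖(exp (-(t * x ^ 2 / 2)) - 1) * x ^ (-a - 1)‖
          = |exp (-(t * x ^ 2 / 2)) - 1| * x ^ (-a - 1) := by
            rw [norm_mul, Real.norm_eq_abs, Real.norm_eq_abs,
              abs_of_nonneg (Real.rpow_nonneg hx0.le _)]
        _ ≤ (t * x ^ 2 / 2) * x ^ (-a - 1) := by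
            exact mul_le_mul_of_nonneg_right (abs_exp_neg_sub_one_le hy)
              (Real.rpow_nonneg hx0.le _)
        _ = t / 2 * x ^ (1 - a) := by rw [← hx2]; ring
  · apply Integrable.mono'
      (integrableOn_Ioi_rpow_of_lt (by linarith : -a - 1 < -1) one_pos)
    · exact hmeas.mono_measure (Measure.restrict_mono (Ioi_subset_Ioi zero_le_one) le_rfl)
    · filter_upwards [ae_restrict_mem measurableSet_Ioi] with x hx
      have hx0 : (0 : ℝ) < x := lt_trans one_pos hx
      have hy : 0 ≤ t * x ^ 2 / 2 := by positivity
      calc ‖(exp (-(t * x ^ 2 / 2)) - 1) * x ^ (-a - 1)‖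
          = |exp (-(t * x ^ 2 / 2)) - 1| * x ^ (-a - 1) := by
            rw [norm_mul, Real.norm_eq_abs, Real.norm_eq_abs,
              abs_of_nonneg (Real.rpow_nonneg hx0.le _)]
        _ ≤ 1 * x ^ (-a - 1) := by
            exact mul_le_mul_of_nonneg_right (abs_exp_neg_sub_one_le_one hy)
              (Real.rpow_nonneg hx0.le _)
        _ = x ^ (-a - 1) := one_mul _

private lemma value_aux (a t : ℝ) (ha₀ : 0 < a) (ha₂ : a < 2) (ht : 0 < t) :
    ∫ x in Ioi (0 : ℝ), (exp (-(t * x ^ 2 / 2)) - 1) * x ^ (-a - 1)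
      = (2 : ℝ) ^ (-1 - a / 2) * Gamma (-(a / 2)) * t ^ (a / 2) := by
  have ht2 : (0 : ℝ) < t / 2 := by positivity
  set F : ℝ → ℝ := fun x => (exp (-(t * x ^ 2 / 2)) - 1) * x ^ (-a) / (-a) with hF
  set F' : ℝ → ℝ := fun x =>
    t / a * (x ^ (1 - a) * exp (-(t * x ^ 2 / 2)))
      + (exp (-(t * x ^ 2 / 2)) - 1) * x ^ (-a - 1) with hF'
  have hint1 := integrableOn_aux a t ha₀ ha₂ ht
  have hint2 : IntegrableOn (fun x : ℝ => x ^ (1 - a) * exp (-(t * x ^ 2 / 2))) (Ioi 0) := by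
    have := integrableOn_rpow_mul_exp_neg_mul_sq ht2 (by linarith : (-1 : ℝ) < 1 - a)
    simpa only [show ∀ x : ℝ, -(t / 2) * x ^ 2 = -(t * x ^ 2 / 2) from fun x => by ring]
      using this
  have hF'int : IntegrableOn F' (Ioi 0) := (hint2.const_mul _).add hint1
  have hderiv : ∀ x ∈ Ioi (0 : ℝ), HasDerivAt F (F' x) x := by
    intro x hx
    have hx0 : (0 : ℝ) < x := hx
    have h1 : HasDerivAt (fun x : ℝ => -(t * x ^ 2 / 2)) (-(t * x)) x := by
      have := (((hasDerivAt_pow 2 x).const_mul t).div_const 2).neg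
      refine this.congr_deriv (Eq.symm ?_)
      ring
    have h2 : HasDerivAt (fun x : ℝ => exp (-(t * x ^ 2 / 2)) - 1)
        (exp (-(t * x ^ 2 / 2)) * (-(t * x))) x := h1.exp.sub_const 1
    have h3 : HasDerivAt (fun x : ℝ => x ^ (-a)) (-a * x ^ (-a - 1)) x :=
      Real.hasDerivAt_rpow_const (Or.inl (ne_of_gt hx0))
    have h4 := (h2.mul h3).div_const (-a)
    refine h4.congr_deriv (Eq.symm ?_)
    have e1 : x ^ (-a) = x ^ (-a - 1) * x := by
      rw [← Real.rpow_add_one (ne_of_gt hx0)]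
      norm_num
    have e2 : x ^ (1 - a) = x ^ (-a - 1) * x ^ (2 : ℕ) := by
      rw [← Real.rpow_natCast x 2, ← Real.rpow_add hx0]
      congr 1
      push_cast
      ring
    simp only [hF']
    rw [e1, e2]
    have ha : a ≠ 0 := ne_of_gt ha₀
    rw [eq_div_iff (neg_ne_zero.mpr ha)]
    field_simp
    ring
  have hF0 : F 0 = 0 := by simp [hF]
  have hcont : ContinuousWithinAt F (Ici 0) 0 := by
    show Tendsto F (nhdsWithin 0 (Ici 0)) (nhds (F 0))
    rw [hF0]
    have hg : Tendsto (fun x : ℝ => t / (2 * a) * x ^ (2 - a))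
        (nhdsWithin 0 (Ici 0)) (nhds 0) := by
      have h0 : Tendsto (fun x : ℝ => x ^ (2 - a)) (nhdsWithin 0 (Ici 0))
          (nhds ((0 : ℝ) ^ (2 - a))) :=
        (Real.continuousAt_rpow_const 0 (2 - a)
          (Or.inr (by linarith))).tendsto.mono_left nhdsWithin_le_nhds
      have h := h0.const_mul (t / (2 * a))
      simpa [Real.zero_rpow (by linarith : (2 : ℝ) - a ≠ 0)] using h
    refine squeeze_zero_norm' ?_ hg
    apply Filter.eventually_of_mem self_mem_nhdsWithin
    intro x hx
    rcases eq_or_lt_of_le (mem_Ici.1 hx) with h | hx0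
    · simp [hF, ← h, Real.zero_rpow (by linarith : (2 : ℝ) - a ≠ 0),
        Real.zero_rpow (by linarith : -a ≠ 0)]
    · have hy : 0 ≤ t * x ^ 2 / 2 := by positivity
      have hx2 : x ^ (2 : ℕ) * x ^ (-a) = x ^ (2 - a) := by
        rw [← Real.rpow_natCast x 2, ← Real.rpow_add hx0]
        congr 1 <;> push_cast <;> ring
      have hnorm : ‖F x‖ = |exp (-(t * x ^ 2 / 2)) - 1| * x ^ (-a) / a := by
        rw [hF]
        rw [Real.norm_eq_abs, abs_div, abs_mul, abs_neg,
          abs_of_nonneg (Real.rpow_nonneg hx0.le _), abs_of_pos ha₀]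
      rw [hnorm]
      have hb := abs_exp_neg_sub_one_le hy
      have hr : (0:ℝ) ≤ x ^ (-a) := Real.rpow_nonneg hx0.le _
      calc |exp (-(t * x ^ 2 / 2)) - 1| * x ^ (-a) / a
          ≤ (t * x ^ 2 / 2) * x ^ (-a) / a := by
            gcongr
        _ = t / (2 * a) * x ^ (2 - a) := by rw [← hx2]; field_simp
  have htop : Tendsto F atTop (nhds 0) := by
    have h1 : Tendsto (fun x : ℝ => -(t * x ^ 2 / 2)) atTop atBot := by
      apply tendsto_neg_atTop_atBot.comp
      exact ((tendsto_pow_atTop (two_ne_zero)).const_mul_atTop ht).atTop_div_const two_pos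
    have h2 : Tendsto (fun x : ℝ => exp (-(t * x ^ 2 / 2)) - 1) atTop (nhds (-1)) := by
      have := Real.tendsto_exp_atBot.comp h1
      simpa using this.sub_const 1
    have h3 : Tendsto (fun x : ℝ => x ^ (-a)) atTop (nhds 0) := tendsto_rpow_neg_atTop ha₀
    have := (h2.mul h3).div_const (-a)
    simpa using this
  have key := integral_Ioi_of_hasDerivAt_of_tendsto hcont hderiv hF'int htop
  rw [hF0, sub_zero] at key
  have hsplit : ∫ x in Ioi (0 : ℝ), F' x
      = t / a * (∫ x in Ioi (0 : ℝ), x ^ (1 - a) * exp (-(t * x ^ 2 / 2)))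
        + ∫ x in Ioi (0 : ℝ), (exp (-(t * x ^ 2 / 2)) - 1) * x ^ (-a - 1) := by
    rw [hF']
    rw [integral_add (hint2.const_mul _) hint1, integral_const_mul]
  have base := integral_rpow_mul_exp_neg_mul_rpow (p := 2) (q := 1 - a) (b := t / 2)
    two_pos (by linarith) ht2
  have hI2 : ∫ x in Ioi (0 : ℝ), x ^ (1 - a) * exp (-(t * x ^ 2 / 2))
      = (t / 2) ^ (-(1 - a + 1) / 2) * (1 / 2) * Gamma ((1 - a + 1) / 2) := by
    rw [← base]
    refine setIntegral_congr_fun measurableSet_Ioi (fun x _ => ?_)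
    rw [Real.rpow_two, show -(t / 2) * x ^ 2 = -(t * x ^ 2 / 2) by ring]
  rw [hsplit, hI2] at key
  have hGamma : Gamma ((1 - a + 1) / 2) = -(a / 2) * Gamma (-(a / 2)) := by
    rw [show (1 - a + 1) / 2 = -(a / 2) + 1 by ring]
    exact Real.Gamma_add_one (by intro h; apply ha₀.ne'; linarith [neg_eq_zero.1 h])
  rw [hGamma] at key
  have e1 : ((t / 2 : ℝ)) ^ (-(1 - a + 1) / 2) = t ^ (a / 2) / t / (2 ^ (a / 2) / 2) := by
    rw [show (-(1 - a + 1) / 2 : ℝ) = a / 2 - 1 by ring,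
      Real.div_rpow ht.le (by norm_num : (0 : ℝ) ≤ 2),
      Real.rpow_sub ht, Real.rpow_sub two_pos, Real.rpow_one]
    norm_num
  rw [e1] at key
  have e2 : ((2 : ℝ)) ^ (-1 - a / 2) = ((2 : ℝ) ^ (a / 2))⁻¹ / 2 := by
    rw [show (-1 - a / 2 : ℝ) = -(a / 2) - 1 by ring, Real.rpow_sub two_pos,
      Real.rpow_neg (by norm_num : (0 : ℝ) ≤ 2), Real.rpow_one]
  rw [e2]
  have h2a : (0 : ℝ) < (2 : ℝ) ^ (a / 2) := Real.rpow_pos_of_pos two_pos _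
  have hI := key
  -- key : t / a * (... ) + I = 0, solve for I
  have : (∫ x in Ioi (0 : ℝ), (exp (-(t * x ^ 2 / 2)) - 1) * x ^ (-a - 1))
      = -(t / a * (t ^ (a / 2) / t / (2 ^ (a / 2) / 2) * (1 / 2)
          * (-(a / 2) * Gamma (-(a / 2))))) := by linarith
  rw [this]
  field_simp

/-- Positive half-line building block of the α-divergence between two
rapidly-decreasing tempered stable (RDTS) Lévy processes. -/
theorem rdts_alpha_divergence_halfline (a l m p q : ℝ)
    (ha₀ : 0 < a) (ha₂ : a < 2) (ha₁ : a ≠ 1)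
    (hl : 0 < l) (hm : 0 < m) (hpq : p + q = 1) (hmix : 0 < p * l + q * m) :
    IntegrableOn
      (fun x : ℝ =>
        (p * exp (-(l * x ^ 2 / 2)) + q * exp (-(m * x ^ 2 / 2))
          - exp (-((p * l + q * m) * x ^ 2 / 2))) * x ^ (-a - 1)) (Ioi 0) ∧
    ∫ x in Ioi (0:ℝ),
        (p * exp (-(l * x ^ 2 / 2)) + q * exp (-(m * x ^ 2 / 2))
          - exp (-((p * l + q * m) * x ^ 2 / 2))) * x ^ (-a - 1)
      = (2:ℝ) ^ (-1 - a / 2) * Gamma (-(a / 2)) *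
          (p * l ^ (a / 2) + q * m ^ (a / 2) - (p * l + q * m) ^ (a / 2)) := by
  have hfun : (fun x : ℝ =>
      (p * exp (-(l * x ^ 2 / 2)) + q * exp (-(m * x ^ 2 / 2))
        - exp (-((p * l + q * m) * x ^ 2 / 2))) * x ^ (-a - 1))
      = fun x : ℝ =>
        p * ((exp (-(l * x ^ 2 / 2)) - 1) * x ^ (-a - 1))
          + q * ((exp (-(m * x ^ 2 / 2)) - 1) * x ^ (-a - 1))
          - (exp (-((p * l + q * m) * x ^ 2 / 2)) - 1) * x ^ (-a - 1) := by
    funext x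
    linear_combination x ^ (-a - 1) * hpq
  have Hl := integrableOn_aux a l ha₀ ha₂ hl
  have Hm := integrableOn_aux a m ha₀ ha₂ hm
  have Hc := integrableOn_aux a (p * l + q * m) ha₀ ha₂ hmix
  have H1 : IntegrableOn (fun x : ℝ =>
      p * ((exp (-(l * x ^ 2 / 2)) - 1) * x ^ (-a - 1))
        + q * ((exp (-(m * x ^ 2 / 2)) - 1) * x ^ (-a - 1))) (Ioi 0) :=
    (Hl.const_mul p).add (Hm.const_mul q)
  constructor
  · rw [hfun]
    exact H1.sub Hc
  · rw [hfun, integral_sub H1 Hc,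
      integral_add (Hl.const_mul p) (Hm.const_mul q), integral_const_mul, integral_const_mul,
      value_aux a l ha₀ ha₂ hl, value_aux a m ha₀ ha₂ hm,
      value_aux a (p * l + q * m) ha₀ ha₂ hmix]
    ring
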